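/- arXiv:2207.10786 — 3 statements merged into one kernel-verified Lean document; each statement's English description precedes it below -/
import Mathlib

section
/- Let λ > 0 and let V̄ = λI + ∑_{s=1}^t xₛxₛᵀ, W̄ = λI + ∑_{s=1}^t cₛ xₛxₛᵀ, and Z = ∑_{s=1}^t (1−cₛ) xₛxₛᵀ, where cₛ ∈ {0,1} and ‖xₛ‖₂ ≤ 1. Set G = ∑_{s=1}^t (1−cₛ). Then (G/λ)·V̄⁻¹ ⪰ V̄⁻¹ Z W̄⁻¹, i.e., the difference (G/λ)V̄⁻¹ − V̄⁻¹ Z W̄⁻¹ is positive semi-definite. -/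
open Matrix

lemma herm_of_symm {d : ℕ} {A : Matrix (Fin d) (Fin d) ℝ} (h : ∀ i j, A i j = A j i) :
    A.IsHermitian := by
  ext i j
  simp [conjTranspose_apply, h i j]

lemma quad_vmv {d : ℕ} (v y : Fin d → ℝ) :
    y ⬝ᵥ (vecMulVec v v) *ᵥ y = (v ⬝ᵥ y) ^ 2 := by
  simp only [dotProduct, mulVec, vecMulVec_apply, pow_two, Finset.sum_mul, Finset.mul_sum]
  rw [Finset.sum_comm]
  apply Finset.sum_congr rfl; intro i _
  apply Finset.sum_congr rfl; intro j _
  ring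

lemma quad_sum {d : ℕ} {ι : Type*} (S : Finset ι) (A : ι → Matrix (Fin d) (Fin d) ℝ)
    (y : Fin d → ℝ) :
    y ⬝ᵥ (∑ s ∈ S, A s) *ᵥ y = ∑ s ∈ S, y ⬝ᵥ A s *ᵥ y := by
  classical
  induction S using Finset.induction_on with
  | empty => simp
  | insert _ _ h ih =>
    rw [Finset.sum_insert h, Finset.sum_insert h, Matrix.add_mulVec, dotProduct_add, ih]

/-- The key antitonicity trick: if `B ⪯ A` in quadratic form sense, both posdef,
then `yᵀA⁻¹y ≤ yᵀB⁻¹y`. -/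
lemma inv_quadform_le {d : ℕ} {A B : Matrix (Fin d) (Fin d) ℝ}
    (hA : A.PosDef) (hB : B.PosDef)
    (hAB : ∀ y, y ⬝ᵥ B *ᵥ y ≤ y ⬝ᵥ A *ᵥ y) (y : Fin d → ℝ) :
    y ⬝ᵥ A⁻¹ *ᵥ y ≤ y ⬝ᵥ B⁻¹ *ᵥ y := by
  have hAdet : IsUnit A.det := (Matrix.isUnit_iff_isUnit_det A).1 hA.isUnit
  have hBdet : IsUnit B.det := (Matrix.isUnit_iff_isUnit_det B).1 hB.isUnit
  set z := A⁻¹ *ᵥ y with hz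
  set w := B⁻¹ *ᵥ y with hw
  have hAz : A *ᵥ z = y := by
    rw [hz, mulVec_mulVec, Matrix.mul_nonsing_inv A hAdet, one_mulVec]
  have hBw : B *ᵥ w = y := by
    rw [hw, mulVec_mulVec, Matrix.mul_nonsing_inv B hBdet, one_mulVec]
  have hsymB : ∀ a b : Fin d → ℝ, a ⬝ᵥ B *ᵥ b = b ⬝ᵥ B *ᵥ a := by
    intro a b
    rw [Matrix.dotProduct_mulVec, ← Matrix.mulVec_transpose]
    have : Bᵀ = B := by
      have := hB.isHermitian
      rwa [Matrix.IsHermitian, conjTranspose_eq_transpose_of_trivial] at this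
    rw [this, dotProduct_comm]
  have h1 : z ⬝ᵥ A *ᵥ z = y ⬝ᵥ z := by rw [hAz, dotProduct_comm]
  have h2 : z ⬝ᵥ B *ᵥ z ≤ z ⬝ᵥ A *ᵥ z := hAB z
  have h3 : 0 ≤ (z - w) ⬝ᵥ B *ᵥ (z - w) := by
    have := hB.posSemidef.dotProduct_mulVec_nonneg (z - w)
    simpa using this
  have hzw : z ⬝ᵥ B *ᵥ w = y ⬝ᵥ z := by rw [hBw, dotProduct_comm]
  have hwz : w ⬝ᵥ B *ᵥ z = y ⬝ᵥ z := by rw [hsymB, hzw]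
  have hww : w ⬝ᵥ B *ᵥ w = y ⬝ᵥ w := by rw [hBw, dotProduct_comm]
  have h3' : 0 ≤ z ⬝ᵥ B *ᵥ z - 2 * (y ⬝ᵥ z) + y ⬝ᵥ w := by
    have expand : (z - w) ⬝ᵥ B *ᵥ (z - w)
        = z ⬝ᵥ B *ᵥ z - z ⬝ᵥ B *ᵥ w - w ⬝ᵥ B *ᵥ z + w ⬝ᵥ B *ᵥ w := by
      rw [Matrix.mulVec_sub, sub_dotProduct, dotProduct_sub, dotProduct_sub]
      ring
    rw [expand, hzw, hwz, hww] at h3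
    linarith
  linarith [h1, h2, h3']

/-- With `V̄ = λI + ∑ xₛxₛᵀ`, `W̄ = λI + ∑ cₛ xₛxₛᵀ`,
`Z = ∑ (1−cₛ) xₛxₛᵀ`, `G = ∑ (1−cₛ)`, `cₛ ∈ {0,1}`, `‖xₛ‖₂ ≤ 1`, `λ > 0`:
`(G/λ)·V̄⁻¹ − V̄⁻¹ Z W̄⁻¹` is positive semi-definite in the quadratic-form sense. -/
theorem stmt4 {d t : ℕ} (lam : ℝ) (hlam : 0 < lam)
    (x : Fin t → Fin d → ℝ) (hx : ∀ s, ∑ i, x s i ^ 2 ≤ 1)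
    (c : Fin t → ℝ) (hc : ∀ s, c s = 0 ∨ c s = 1)
    (V W Z : Matrix (Fin d) (Fin d) ℝ)
    (hV : V = lam • (1 : Matrix (Fin d) (Fin d) ℝ) + ∑ s, vecMulVec (x s) (x s))
    (hW : W = lam • (1 : Matrix (Fin d) (Fin d) ℝ) + ∑ s, c s • vecMulVec (x s) (x s))
    (hZ : Z = ∑ s, (1 - c s) • vecMulVec (x s) (x s)) :
    ∀ y : Fin d → ℝ,
      0 ≤ y ⬝ᵥ (((∑ s, (1 - c s)) / lam) • V⁻¹ - V⁻¹ * Z * W⁻¹) *ᵥ y := by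
  -- setup
  set G : ℝ := ∑ s, (1 - c s) with hGdef
  have hc01 : ∀ s, 0 ≤ 1 - c s ∧ 1 - c s ≤ 1 := by
    intro s; rcases hc s with h | h <;> rw [h] <;> norm_num
  have hG0 : 0 ≤ G := Finset.sum_nonneg fun s _ => (hc01 s).1
  have hμ : 0 < G + lam := by linarith
  -- quadratic forms of V and W
  have quadV : ∀ y : Fin d → ℝ,
      y ⬝ᵥ V *ᵥ y = lam * (y ⬝ᵥ y) + ∑ s, (x s ⬝ᵥ y) ^ 2 := by
    intro y
    rw [hV, Matrix.add_mulVec, dotProduct_add, Matrix.smul_mulVec, one_mulVec,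
      dotProduct_smul, smul_eq_mul]
    congr 1
    rw [quad_sum]
    exact Finset.sum_congr rfl fun s _ => quad_vmv _ _
  have quadW : ∀ y : Fin d → ℝ,
      y ⬝ᵥ W *ᵥ y = lam * (y ⬝ᵥ y) + ∑ s, c s * (x s ⬝ᵥ y) ^ 2 := by
    intro y
    rw [hW, Matrix.add_mulVec, dotProduct_add, Matrix.smul_mulVec, one_mulVec,
      dotProduct_smul, smul_eq_mul]
    congr 1
    rw [quad_sum]
    refine Finset.sum_congr rfl fun s _ => ?_
    rw [Matrix.smul_mulVec, dotProduct_smul, quad_vmv]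
    simp
  -- hermitian-ness
  have hermV : V.IsHermitian := by
    apply herm_of_symm; intro i j
    rw [hV]
    simp only [Matrix.add_apply, Matrix.smul_apply, Matrix.one_apply, Matrix.sum_apply,
      vecMulVec_apply]
    have hif : (if i = j then (1:ℝ) else 0) = (if j = i then 1 else 0) := by
      simp only [eq_comm]
    rw [hif]
    congr 1
    exact Finset.sum_congr rfl fun s _ => mul_comm _ _
  have hermW : W.IsHermitian := by
    apply herm_of_symm; intro i j
    rw [hW]
    simp only [Matrix.add_apply, Matrix.smul_apply, Matrix.one_apply, Matrix.sum_apply,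
      vecMulVec_apply]
    have hif : (if i = j then (1:ℝ) else 0) = (if j = i then 1 else 0) := by
      simp only [eq_comm]
    rw [hif]
    congr 1
    exact Finset.sum_congr rfl fun s _ => by rw [mul_comm (x s i) (x s j)]
  -- positive definiteness
  have hVpd : V.PosDef := by
    refine Matrix.PosDef.of_dotProduct_mulVec_pos hermV fun y hy => ?_
    have hy2 : 0 < y ⬝ᵥ y := by
      have := Matrix.dotProduct_star_self_pos_iff (v := y) |>.2 hy
      simpa using this
    have : star y = y := by simp
    rw [this, quadV]
    have : 0 ≤ ∑ s, (x s ⬝ᵥ y) ^ 2 := Finset.sum_nonneg fun s _ => sq_nonneg _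
    nlinarith
  have hWpd : W.PosDef := by
    refine Matrix.PosDef.of_dotProduct_mulVec_pos hermW fun y hy => ?_
    have hy2 : 0 < y ⬝ᵥ y := by
      have := Matrix.dotProduct_star_self_pos_iff (v := y) |>.2 hy
      simpa using this
    have hst : star y = y := by simp
    rw [hst, quadW]
    have : 0 ≤ ∑ s, c s * (x s ⬝ᵥ y) ^ 2 := Finset.sum_nonneg fun s _ => by
      rcases hc s with h | h <;> rw [h] <;> positivity
    nlinarith
  have hVdet : IsUnit V.det := (Matrix.isUnit_iff_isUnit_det V).1 hVpd.isUnit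
  have hWdet : IsUnit W.det := (Matrix.isUnit_iff_isUnit_det W).1 hWpd.isUnit
  -- Z = V - W
  have hZVW : Z = V - W := by
    rw [hZ, hV, hW, add_sub_add_left_eq_sub, ← Finset.sum_sub_distrib]
    exact Finset.sum_congr rfl fun s _ => by rw [sub_smul, one_smul]
  -- V⁻¹ Z W⁻¹ = W⁻¹ - V⁻¹
  have key : V⁻¹ * Z * W⁻¹ = W⁻¹ - V⁻¹ := by
    rw [hZVW, mul_sub, Matrix.nonsing_inv_mul V hVdet, sub_mul, Matrix.one_mul,
      Matrix.mul_assoc, Matrix.mul_nonsing_inv W hWdet, Matrix.mul_one]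
  -- the scaled matrix B := (lam/(G+lam)) • V
  set B : Matrix (Fin d) (Fin d) ℝ := (lam / (G + lam)) • V with hBdef
  have hk : 0 < lam / (G + lam) := div_pos hlam hμ
  have hBpd : B.PosDef := by
    refine Matrix.PosDef.of_dotProduct_mulVec_pos ?_ fun y hy => ?_
    · apply herm_of_symm
      intro i j
      rw [hBdef]
      simp only [Matrix.smul_apply, smul_eq_mul]
      congr 1
      have := hermV.apply j i
      simpa using this
    · have := hVpd.dotProduct_mulVec_pos hy
      rw [hBdef, Matrix.smul_mulVec, dotProduct_smul]
      exact smul_pos hk this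
  -- B ⪯ W in quadratic form sense
  have hBW : ∀ y : Fin d → ℝ, y ⬝ᵥ B *ᵥ y ≤ y ⬝ᵥ W *ᵥ y := by
    intro y
    rw [hBdef, Matrix.smul_mulVec, dotProduct_smul, smul_eq_mul]
    rw [div_mul_eq_mul_div, div_le_iff₀ hμ]
    -- lam * yᵀVy ≤ yᵀWy * (G + lam)
    rw [quadV, quadW]
    set n : ℝ := y ⬝ᵥ y with hn
    have hn0 : 0 ≤ n := by
      have := dotProduct_star_self_nonneg y
      simpa [hn] using this
    set p : Fin t → ℝ := fun s => (x s ⬝ᵥ y) ^ 2 with hp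
    have hdiff : (lam * n + ∑ s, c s * p s) * (G + lam) - lam * (lam * n + ∑ s, p s)
        = ∑ s, (lam * (1 - c s) * n + ((G + lam) * c s - lam) * p s) := by
      rw [Finset.sum_add_distrib]
      have e1 : ∑ s, lam * (1 - c s) * n = lam * n * G := by
        rw [hGdef, Finset.mul_sum]
        exact Finset.sum_congr rfl fun s _ => by ring
      have e2 : ∑ s, ((G + lam) * c s - lam) * p s
          = (G + lam) * (∑ s, c s * p s) - lam * (∑ s, p s) := by
        rw [Finset.mul_sum, Finset.mul_sum, ← Finset.sum_sub_distrib]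
        exact Finset.sum_congr rfl fun s _ => by ring
      rw [e1, e2]
      ring
    have hterm : ∀ s : Fin t, 0 ≤ lam * (1 - c s) * n + ((G + lam) * c s - lam) * p s := by
      intro s
      rcases hc s with h | h
      · rw [h]
        have hps : p s ≤ n := by
          have hcs := Finset.sum_mul_sq_le_sq_mul_sq Finset.univ (x s) y
          have hx1 := hx s
          have hyn : ∑ i, y i ^ 2 = n := by simp [hn, dotProduct, pow_two]
          have hps2 : (∑ i, x s i * y i) = x s ⬝ᵥ y := rfl
          have hn' : 0 ≤ ∑ i, y i ^ 2 := Finset.sum_nonneg fun i _ => sq_nonneg _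
          calc p s = (∑ i, x s i * y i) ^ 2 := by rw [hp]; rfl
            _ ≤ (∑ i, x s i ^ 2) * ∑ i, y i ^ 2 := hcs
            _ ≤ 1 * ∑ i, y i ^ 2 := mul_le_mul_of_nonneg_right hx1 hn'
            _ = n := by rw [one_mul, hyn]
        nlinarith
      · rw [h]
        have : 0 ≤ p s := sq_nonneg _
        nlinarith
    have hsum : 0 ≤ (lam * n + ∑ s, c s * p s) * (G + lam) - lam * (lam * n + ∑ s, p s) := by
      rw [hdiff]
      exact Finset.sum_nonneg fun s _ => hterm s
    linarith
  -- B⁻¹ = ((G+lam)/lam) • V⁻¹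
  have hBinv : B⁻¹ = ((G + lam) / lam) • V⁻¹ := by
    apply Matrix.inv_eq_right_inv
    rw [hBdef, smul_mul_assoc, mul_smul_comm, Matrix.mul_nonsing_inv V hVdet, smul_smul]
    rw [div_mul_div_comm]
    rw [mul_comm lam (G + lam)]
    rw [div_self (by positivity), one_smul]
  intro y
  have hmain := inv_quadform_le hWpd hBpd hBW y
  rw [hBinv, Matrix.smul_mulVec, dotProduct_smul, smul_eq_mul] at hmain
  rw [key, sub_mulVec, dotProduct_sub, Matrix.smul_mulVec, dotProduct_smul, smul_eq_mul,
    sub_mulVec, dotProduct_sub]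
  have hfin : (G + lam) / lam = G / lam + 1 := by field_simp
  rw [hfin] at hmain
  linarith
end

section
/- Let (xₜ)_{t≥1} be vectors in ℝ^d with ‖xₜ‖₂ ≤ 1, let λ ≥ 1/2, and define V̄₀ = λI and V̄ₜ = V̄_{t−1} + xₜxₜᵀ. Then ∑_{t=1}^T xₜᵀ V̄_{t−1}⁻¹ xₜ ≤ 2 log(det(V̄_T)/det(V̄₀)). -/
open Matrix

lemma mylog_bound {u : ℝ} (h0 : 0 ≤ u) (h2 : u ≤ 2) : u ≤ 2 * Real.log (1 + u) := by
  have h3 : (1 : ℝ) ≤ Real.log 3 := by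
    have := Real.exp_one_lt_d9
    have h : Real.exp 1 < 3 := by linarith
    calc (1 : ℝ) = Real.log (Real.exp 1) := (Real.log_exp 1).symm
      _ ≤ Real.log 3 := Real.log_le_log (Real.exp_pos 1) h.le
  have hconc := strictConcaveOn_log_Ioi.concaveOn.2
    (show (1:ℝ) ∈ Set.Ioi 0 by norm_num) (show (3:ℝ) ∈ Set.Ioi 0 by norm_num)
    (show (0:ℝ) ≤ 1 - u / 2 by linarith) (show (0:ℝ) ≤ u / 2 by linarith)
    (show (1 - u / 2) + (u / 2) = 1 by ring)
  have hsum : (1 - u / 2) • (1 : ℝ) + (u / 2) • (3 : ℝ) = 1 + u := by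
    simp [smul_eq_mul]; ring
  rw [hsum] at hconc
  have : (u / 2) * 1 ≤ (u / 2) * Real.log 3 := by
    apply mul_le_mul_of_nonneg_left h3 (by linarith)
  simp [smul_eq_mul, Real.log_one] at hconc
  nlinarith [hconc]

/-- elliptical potential lemma: with `V 0 = λ•I`, `λ ≥ 1/2`,
`V (t+1) = V t + xₜxₜᵀ`, and `‖xₜ‖₂ ≤ 1`,
`∑_{t<T} xₜᵀ (V t)⁻¹ xₜ ≤ 2 log (det (V T) / det (V 0))`. -/
theorem stmt6 {d : ℕ} (lam : ℝ) (hlam : 1 / 2 ≤ lam)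
    (x : ℕ → Fin d → ℝ) (hx : ∀ t, ∑ i, x t i ^ 2 ≤ 1)
    (V : ℕ → Matrix (Fin d) (Fin d) ℝ)
    (hV0 : V 0 = lam • (1 : Matrix (Fin d) (Fin d) ℝ))
    (hVs : ∀ t, V (t + 1) = V t + vecMulVec (x t) (x t)) (T : ℕ) :
    ∑ t ∈ Finset.range T, x t ⬝ᵥ (V t)⁻¹ *ᵥ x t
      ≤ 2 * Real.log ((V T).det / (V 0).det) := by
  have hlam0 : 0 < lam := by linarith
  -- vecMulVec is PSD
  have hpsd : ∀ t, (vecMulVec (x t) (x t)).PosSemidef := by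
    intro t
    refine PosSemidef.of_dotProduct_mulVec_nonneg ?_ ?_
    · ext i j
      simp [vecMulVec_apply, conjTranspose_apply, mul_comm]
    · intro v
      have : (vecMulVec (x t) (x t)) *ᵥ v = (x t ⬝ᵥ v) • x t := by
        ext i
        simp only [mulVec, dotProduct, vecMulVec_apply, Pi.smul_apply, smul_eq_mul,
          Finset.sum_mul]
        exact Finset.sum_congr rfl fun j _ => by ring
      rw [this]
      simp only [star_trivial, dotProduct_smul, smul_eq_mul]
      have : v ⬝ᵥ x t = x t ⬝ᵥ v := dotProduct_comm _ _
      rw [this]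
      exact mul_self_nonneg _
  -- each V t is positive definite
  have hPD : ∀ t, (V t).PosDef := by
    intro t
    induction t with
    | zero =>
      rw [hV0]
      rw [smul_one_eq_diagonal]
      exact posDef_diagonal_iff.mpr fun _ => hlam0
    | succ n ih =>
      rw [hVs n]
      exact ih.add_posSemidef (hpsd n)
  -- lower bound: v ⬝ᵥ V t *ᵥ v ≥ lam * (v ⬝ᵥ v)
  have hlow : ∀ t (v : Fin d → ℝ), lam * (v ⬝ᵥ v) ≤ v ⬝ᵥ (V t) *ᵥ v := by
    intro t
    induction t with
    | zero =>
      intro v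
      rw [hV0]
      simp [smul_mulVec, dotProduct_smul]
    | succ n ih =>
      intro v
      rw [hVs n, add_mulVec, dotProduct_add]
      have := (hpsd n).dotProduct_mulVec_nonneg v
      simp only [star_trivial] at this
      linarith [ih v]
  set s : ℕ → ℝ := fun t => x t ⬝ᵥ (V t)⁻¹ *ᵥ x t with hs
  have hs0 : ∀ t, 0 ≤ s t := by
    intro t
    have := (hPD t).posSemidef.inv.dotProduct_mulVec_nonneg (x t)
    simpa using this
  -- s t ≤ 2
  have hs2 : ∀ t, s t ≤ 2 := by
    intro t
    set y : Fin d → ℝ := (V t)⁻¹ *ᵥ x t with hy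
    have hinv : V t * (V t)⁻¹ = 1 := mul_nonsing_inv _ (hPD t).det_pos.ne'.isUnit
    have hxy : x t = V t *ᵥ y := by
      rw [hy, mulVec_mulVec, hinv, one_mulVec]
    have hst' : s t = x t ⬝ᵥ y := rfl
    have h1 : lam * (y ⬝ᵥ y) ≤ s t := by
      have : s t = y ⬝ᵥ (V t) *ᵥ y := by
        rw [hst']
        conv_lhs => rw [hxy]
        exact dotProduct_comm _ _
      rw [this]
      exact hlow t y
    -- Cauchy-Schwarz: s t = x t ⬝ᵥ y, (x⬝y)^2 ≤ ‖x‖²‖y‖² ≤ y⬝y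
    have hcs : (s t) ^ 2 ≤ y ⬝ᵥ y := by
      have h := Finset.sum_mul_sq_le_sq_mul_sq Finset.univ (x t) y
      have hyy : y ⬝ᵥ y = ∑ i, y i ^ 2 := by simp [dotProduct, sq]
      have hst : s t = ∑ i, x t i * y i := rfl
      calc (s t) ^ 2 = (∑ i, x t i * y i) ^ 2 := by rw [hst]
        _ ≤ (∑ i, x t i ^ 2) * (∑ i, y i ^ 2) := h
        _ ≤ 1 * (∑ i, y i ^ 2) := by
            apply mul_le_mul_of_nonneg_right (hx t)
            exact Finset.sum_nonneg fun i _ => sq_nonneg _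
        _ = y ⬝ᵥ y := by rw [one_mul, hyy]
    -- combine: lam * s^2 ≤ lam * (y⬝y) ≤ s, so s ≤ 1/lam ≤ 2
    have key : lam * (s t) ^ 2 ≤ s t := by
      calc lam * (s t) ^ 2 ≤ lam * (y ⬝ᵥ y) := by
            apply mul_le_mul_of_nonneg_left hcs hlam0.le
        _ ≤ s t := h1
    nlinarith [hs0 t, hlam0, key, hlam]
  -- determinant recurrence
  have hdet : ∀ t, (V (t + 1)).det = (V t).det * (1 + s t) := by
    intro t
    have hA : IsUnit (V t).det := (hPD t).det_pos.ne'.isUnit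
    rw [hVs t, vecMulVec_eq Unit, det_add_replicateCol_mul_replicateRow hA]
    congr 1
    have : replicateRow Unit (x t) * (V t)⁻¹ * replicateCol Unit (x t)
        = replicateRow Unit (x t ᵥ* (V t)⁻¹) * replicateCol Unit (x t) := by
      rw [replicateRow_vecMul]
    rw [this, det_unique, Matrix.add_apply, Matrix.one_apply_eq, replicateRow_mul_replicateCol_apply,
      ← dotProduct_mulVec]
  have hdetpos : ∀ t, 0 < (V t).det := fun t => (hPD t).det_pos
  -- log telescoping
  have hlog : ∀ t, Real.log ((V (t+1)).det) - Real.log ((V t).det) = Real.log (1 + s t) := by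
    intro t
    rw [hdet t, Real.log_mul (hdetpos t).ne' (by nlinarith [hs0 t])]
    ring
  have htel : ∑ t ∈ Finset.range T, Real.log (1 + s t)
      = Real.log ((V T).det) - Real.log ((V 0).det) := by
    rw [← Finset.sum_range_sub (fun t => Real.log ((V t).det))]
    exact Finset.sum_congr rfl fun t _ => (hlog t).symm
  calc ∑ t ∈ Finset.range T, s t
      ≤ ∑ t ∈ Finset.range T, 2 * Real.log (1 + s t) :=
        Finset.sum_le_sum fun t _ => mylog_bound (hs0 t) (hs2 t)
    _ = 2 * ∑ t ∈ Finset.range T, Real.log (1 + s t) := by rw [Finset.mul_sum]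
    _ = 2 * (Real.log ((V T).det) - Real.log ((V 0).det)) := by rw [htel]
    _ = 2 * Real.log ((V T).det / (V 0).det) := by
        rw [Real.log_div (hdetpos T).ne' (hdetpos 0).ne']
end

section
/- Let μ: ℝ → ℝ be differentiable with κ ≤ μ'(z) for all z in an interval containing ⟨x, θ₁⟩ and ⟨x, θ₂⟩, where κ > 0. Let x₁,…,xₜ ∈ ℝ^d, c₁,…,cₜ ∈ {0,1}, α > 0, a > 0, and define g(θ) = α·a·θ + ∑ₛ cₛ μ(⟨xₛ, θ⟩) xₛ and W̄ = (α·a/κ)·I + ∑ₛ cₛ xₛxₛᵀ. Then for all θ₁, θ₂ ∈ ℝ^d: κ·‖θ₁ − θ₂‖_{W̄} ≤ ‖g(θ₁) − g(θ₂)‖_{W̄⁻¹}, where ‖v‖_A = √(vᵀAv). -/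
open Matrix

lemma mvt19 (μ : ℝ → ℝ) (hdiff : Differentiable ℝ μ) (κ : ℝ)
    (hderiv : ∀ z : ℝ, κ ≤ deriv μ z) (p q : ℝ) :
    ∃ m, κ ≤ m ∧ μ p - μ q = m * (p - q) := by
  rcases lt_trichotomy p q with h | h | h
  · obtain ⟨ξ, _, hξ⟩ := exists_deriv_eq_slope μ h hdiff.continuous.continuousOn
      (fun z _ => (hdiff z).differentiableWithinAt)
    refine ⟨deriv μ ξ, hderiv ξ, ?_⟩
    have h2 : μ q - μ p = deriv μ ξ * (q - p) := by
      rw [hξ, div_mul_cancel₀ _ (sub_ne_zero.mpr h.ne')]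
    linear_combination (-1 : ℝ) * h2
  · exact ⟨κ, le_refl κ, by rw [h]; ring⟩
  · obtain ⟨ξ, _, hξ⟩ := exists_deriv_eq_slope μ h hdiff.continuous.continuousOn
      (fun z _ => (hdiff z).differentiableWithinAt)
    refine ⟨deriv μ ξ, hderiv ξ, ?_⟩
    rw [hξ, div_mul_cancel₀ _ (sub_ne_zero.mpr h.ne')]

lemma csB19 {n : ℕ} (B : Matrix (Fin n) (Fin n) ℝ) (hB : B.PosSemidef)
    (v u : Fin n → ℝ) :
    (v ⬝ᵥ B *ᵥ u) ^ 2 ≤ (v ⬝ᵥ B *ᵥ v) * (u ⬝ᵥ B *ᵥ u) := by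
  obtain ⟨S, hSh, hS⟩ : ∃ S : Matrix (Fin n) (Fin n) ℝ, Sᵀ = S ∧ S * S = B := by
    open scoped MatrixOrder in
    have h0 : (0 : Matrix (Fin n) (Fin n) ℝ) ≤ CFC.sqrt B := CFC.sqrt_nonneg B
    refine ⟨CFC.sqrt B, ?_, CFC.sqrt_mul_sqrt_self B hB.nonneg⟩
    have := (Matrix.nonneg_iff_posSemidef.mp h0).isHermitian
    simpa [Matrix.IsHermitian, Matrix.conjTranspose_eq_transpose_of_trivial] using this
  have key : ∀ w z : Fin n → ℝ, w ⬝ᵥ B *ᵥ z = (S *ᵥ w) ⬝ᵥ (S *ᵥ z) := by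
    intro w z
    conv_lhs => rw [← hS]
    rw [← Matrix.mulVec_mulVec, Matrix.dotProduct_mulVec w, ← Matrix.mulVec_transpose, hSh]
  rw [key v u, key v v, key u u]
  have := Finset.sum_mul_sq_le_sq_mul_sq Finset.univ (S *ᵥ v) (S *ᵥ u)
  simpa [dotProduct, pow_two] using this

lemma dps19 {n k : ℕ} (v : Fin n → ℝ) (f : Fin k → Fin n → ℝ) :
    v ⬝ᵥ (∑ s, f s) = ∑ s, v ⬝ᵥ f s := by
  simp only [dotProduct, Finset.sum_apply, Finset.mul_sum]
  rw [Finset.sum_comm]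

lemma quad19 {n t : ℕ} (x : Fin t → Fin n → ℝ) (c : Fin t → ℝ) (r : ℝ)
    (z w : Fin n → ℝ) :
    z ⬝ᵥ ((r • (1 : Matrix (Fin n) (Fin n) ℝ)
        + ∑ s, c s • vecMulVec (x s) (x s)) *ᵥ w)
      = r * (z ⬝ᵥ w) + ∑ s, c s * (x s ⬝ᵥ z) * (x s ⬝ᵥ w) := by
  have hsum : (∑ s, c s • vecMulVec (x s) (x s)) *ᵥ w
      = ∑ s, (c s * (x s ⬝ᵥ w)) • x s := by
    ext i
    simp only [Matrix.mulVec, dotProduct, Finset.sum_apply, Matrix.sum_apply,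
      Matrix.smul_apply, Matrix.vecMulVec_apply, smul_eq_mul, Pi.smul_apply,
      Finset.sum_mul, Finset.mul_sum]
    rw [Finset.sum_comm]
    apply Finset.sum_congr rfl
    intro s _
    ring_nf
  rw [Matrix.add_mulVec, hsum, Matrix.smul_mulVec, Matrix.one_mulVec,
    dotProduct_add, dotProduct_smul]
  congr 1
  · rw [dps19]
    apply Finset.sum_congr rfl
    intro s _
    rw [dotProduct_smul, smul_eq_mul]
    rw [dotProduct_comm z (x s)]
    ring

/-- For a differentiable link function `μ` with `μ' ≥ κ > 0`,
`g(θ) = α·a·θ + ∑ₛ cₛ μ(⟨xₛ,θ⟩) xₛ` and `W̄ = (α·a/κ)I + ∑ₛ cₛ xₛxₛᵀ`, we have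
`κ‖θ₁ − θ₂‖_{W̄} ≤ ‖g(θ₁) − g(θ₂)‖_{W̄⁻¹}`. -/
theorem stmt19 {d t : ℕ} (μ : ℝ → ℝ) (hdiff : Differentiable ℝ μ)
    (κ : ℝ) (hκ : 0 < κ) (hderiv : ∀ z : ℝ, κ ≤ deriv μ z)
    (x : Fin t → Fin d → ℝ) (c : Fin t → ℝ) (hc : ∀ s, c s = 0 ∨ c s = 1)
    (α a : ℝ) (hα : 0 < α) (ha : 0 < a)
    (g : (Fin d → ℝ) → (Fin d → ℝ))
    (hg : ∀ θ, g θ = (α * a) • θ + ∑ s, (c s * μ (x s ⬝ᵥ θ)) • x s)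
    (W : Matrix (Fin d) (Fin d) ℝ)
    (hW : W = (α * a / κ) • (1 : Matrix (Fin d) (Fin d) ℝ)
        + ∑ s, c s • vecMulVec (x s) (x s)) :
    ∀ θ₁ θ₂ : Fin d → ℝ,
      κ * Real.sqrt ((θ₁ - θ₂) ⬝ᵥ W *ᵥ (θ₁ - θ₂))
        ≤ Real.sqrt ((g θ₁ - g θ₂) ⬝ᵥ W⁻¹ *ᵥ (g θ₁ - g θ₂)) := by
  intro θ₁ θ₂
  have hcnn : ∀ s, (0:ℝ) ≤ c s := fun s => by rcases hc s with h | h <;> simp [h]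
  have hr : 0 < α * a / κ := by positivity
  -- quadratic form of W
  have hquad : ∀ z w : Fin d → ℝ, z ⬝ᵥ W *ᵥ w
      = (α * a / κ) * (z ⬝ᵥ w) + ∑ s, c s * (x s ⬝ᵥ z) * (x s ⬝ᵥ w) := by
    intro z w; rw [hW]; exact quad19 x c _ z w
  -- W is positive definite
  have hWsymm : Wᵀ = W := by
    rw [hW]
    ext i j
    by_cases h : i = j
    · subst h; rfl
    · simp [Matrix.transpose_apply, Matrix.one_apply, h, Ne.symm h,
        Matrix.sum_apply, Matrix.smul_apply, Matrix.vecMulVec_apply,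
        smul_eq_mul, mul_comm, mul_left_comm]
  have hWpd : W.PosDef := by
    refine Matrix.PosDef.of_dotProduct_mulVec_pos ?_ ?_
    · show Wᴴ = W
      rw [Matrix.conjTranspose_eq_transpose_of_trivial]
      exact hWsymm
    · intro z hz
      have hzz : 0 < z ⬝ᵥ z := by
        rcases Function.ne_iff.mp hz with ⟨i, hi⟩
        have h1 : 0 < z i * z i := mul_self_pos.mpr hi
        have h2 : z i * z i ≤ z ⬝ᵥ z :=
          Finset.single_le_sum (f := fun j => z j * z j)
            (fun j _ => mul_self_nonneg (z j)) (Finset.mem_univ i)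
        linarith
      have hsum : 0 ≤ ∑ s, c s * (x s ⬝ᵥ z) * (x s ⬝ᵥ z) :=
        Finset.sum_nonneg fun s _ => by
          rw [mul_assoc]; exact mul_nonneg (hcnn s) (mul_self_nonneg _)
      have hq := hquad z z
      have : 0 < z ⬝ᵥ W *ᵥ z := by
        rw [hq]; have := mul_pos hr hzz; linarith
      simpa using this
  have hdet : IsUnit W.det := (ne_of_gt hWpd.det_pos).isUnit
  have hWinv : (W⁻¹).PosSemidef := hWpd.inv.posSemidef
  set v : Fin d → ℝ := θ₁ - θ₂ with hv
  set u : Fin d → ℝ := g θ₁ - g θ₂ with hu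
  -- mean value theorem slopes
  choose m hm hmeq using fun s => mvt19 μ hdiff κ hderiv (x s ⬝ᵥ θ₁) (x s ⬝ᵥ θ₂)
  have hxv : ∀ s, x s ⬝ᵥ θ₁ - x s ⬝ᵥ θ₂ = x s ⬝ᵥ v := fun s => by
    rw [hv, dotProduct_sub]
  -- v ⬝ u
  have hvu : v ⬝ᵥ u = α * a * (v ⬝ᵥ v) + ∑ s, c s * m s * (x s ⬝ᵥ v) ^ 2 := by
    rw [hu, hg θ₁, hg θ₂]
    rw [dotProduct_sub, dotProduct_add, dotProduct_add,
      dotProduct_smul, dotProduct_smul, dps19, dps19]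
    simp only [dotProduct_smul, smul_eq_mul]
    have hvth : v ⬝ᵥ θ₁ - v ⬝ᵥ θ₂ = v ⬝ᵥ v := by
      rw [hv]; rw [dotProduct_sub]
    have hsplit : (∑ s, c s * μ (x s ⬝ᵥ θ₁) * (v ⬝ᵥ x s))
        - (∑ s, c s * μ (x s ⬝ᵥ θ₂) * (v ⬝ᵥ x s))
        = ∑ s, c s * m s * (x s ⬝ᵥ v) ^ 2 := by
      rw [← Finset.sum_sub_distrib]
      refine Finset.sum_congr rfl fun s _ => ?_
      rw [dotProduct_comm v (x s)]
      linear_combination (c s * (x s ⬝ᵥ v)) * hmeq s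
        + (c s * m s * (x s ⬝ᵥ v)) * hxv s
    linear_combination hsplit + (α * a) * hvth
  have hA0 : 0 ≤ v ⬝ᵥ W *ᵥ v := by
    have := hWpd.posSemidef.dotProduct_mulVec_nonneg v; simpa using this
  have hB0 : 0 ≤ u ⬝ᵥ W⁻¹ *ᵥ u := by
    have := hWinv.dotProduct_mulVec_nonneg u; simpa using this
  have hκA : κ * (v ⬝ᵥ W *ᵥ v) ≤ v ⬝ᵥ u := by
    rw [hquad v v, hvu, mul_add]
    have e1 : κ * (α * a / κ * (v ⬝ᵥ v)) = α * a * (v ⬝ᵥ v) := by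
      field_simp
    have e2 : κ * (∑ s, c s * (x s ⬝ᵥ v) * (x s ⬝ᵥ v))
        ≤ ∑ s, c s * m s * (x s ⬝ᵥ v) ^ 2 := by
      rw [Finset.mul_sum]
      refine Finset.sum_le_sum fun s _ => ?_
      have h1 := hm s
      have h2 := hcnn s
      rw [pow_two]
      nlinarith [mul_nonneg (mul_nonneg (sub_nonneg.mpr h1) h2)
        (mul_self_nonneg (x s ⬝ᵥ v))]
    linarith
  have hkey : ∀ z, (W *ᵥ v) ⬝ᵥ W⁻¹ *ᵥ z = v ⬝ᵥ z := by
    intro z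
    rw [Matrix.dotProduct_mulVec, ← Matrix.mulVec_transpose,
      Matrix.transpose_nonsing_inv, hWsymm, Matrix.mulVec_mulVec,
      Matrix.nonsing_inv_mul W hdet, Matrix.one_mulVec]
  have hcs := csB19 W⁻¹ hWinv (W *ᵥ v) u
  rw [hkey u, hkey (W *ᵥ v)] at hcs
  have hfin : κ ^ 2 * (v ⬝ᵥ W *ᵥ v) ≤ u ⬝ᵥ W⁻¹ *ᵥ u := by
    rcases eq_or_lt_of_le hA0 with hAe | hApos
    · rw [← hAe, mul_zero]; exact hB0
    · have h1 : (κ * (v ⬝ᵥ W *ᵥ v)) ^ 2 ≤ (v ⬝ᵥ u) ^ 2 :=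
        pow_le_pow_left₀ (mul_nonneg hκ.le hA0) hκA 2
      nlinarith [h1, hcs, hApos]
  calc κ * Real.sqrt (v ⬝ᵥ W *ᵥ v)
      = Real.sqrt (κ ^ 2 * (v ⬝ᵥ W *ᵥ v)) := by
        rw [Real.sqrt_mul (sq_nonneg κ), Real.sqrt_sq hκ.le]
    _ ≤ Real.sqrt (u ⬝ᵥ W⁻¹ *ᵥ u) := Real.sqrt_le_sqrt hfin
end
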